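/- Asymptotics of the inverse of J_μ(coth(tS_μ/2) − I): Let m ≥ 1, let A ∈ M_m(ℝ) be symmetric and invertible, and fix t ∈ ℝ \ {0}. Then there exist constants C > 0 and δ > 0 such that for every invertible skew-symmetric matrix J_μ ∈ M_m(ℝ) with ‖J_μ‖ < δ, setting S_μ := -A J_μ, the matrix sinh(t S_μ/2) is invertible, the matrix J_μ( coth(t S_μ/2) − I ) is invertible, and ‖ ( J_μ( coth(t S_μ/2) − I ) )⁻¹ + (t/2) A ‖ ≤ C ‖J_μ‖. -/

import Mathlib

open Matrix

/-- Matrix hyperbolic sine, via the matrix exponential. -/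
noncomputable def msinh {m : ℕ} (M : Matrix (Fin m) (Fin m) ℝ) : Matrix (Fin m) (Fin m) ℝ :=
  (2⁻¹ : ℝ) • (NormedSpace.exp M - NormedSpace.exp (-M))

/-- Matrix hyperbolic cosine, via the matrix exponential. -/
noncomputable def mcosh {m : ℕ} (M : Matrix (Fin m) (Fin m) ℝ) : Matrix (Fin m) (Fin m) ℝ :=
  (2⁻¹ : ℝ) • (NormedSpace.exp M + NormedSpace.exp (-M))

/-- Matrix hyperbolic cotangent `coth M = cosh M · (sinh M)⁻¹`. -/
noncomputable def mcoth {m : ℕ} (M : Matrix (Fin m) (Fin m) ℝ) : Matrix (Fin m) (Fin m) ℝ :=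
  mcosh M * (msinh M)⁻¹

/-- The operator norm of a real matrix acting on Euclidean space. -/
noncomputable def matOpNorm {m : ℕ} (M : Matrix (Fin m) (Fin m) ℝ) : ℝ :=
  ‖LinearMap.toContinuousLinearMap (Matrix.toEuclideanLin M)‖

section Generic
open scoped Nat
variable {𝔸 : Type*} [NormedRing 𝔸] [NormedAlgebra ℝ 𝔸] [CompleteSpace 𝔸] [NormOneClass 𝔸]

/-- `expW X = ∑ X^n/(n+2)!`, so that `exp X = 1 + X + X² * expW X`. -/
noncomputable def expW (X : 𝔸) : 𝔸 := ∑' n : ℕ, (((n + 2)! : ℝ))⁻¹ • X ^ n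

set_option linter.unusedSectionVars false in
lemma norm_pow_le₀ (X : 𝔸) (n : ℕ) : ‖X ^ n‖ ≤ ‖X‖ ^ n := by
  cases n with
  | zero => simp
  | succ k => exact norm_pow_le' X k.succ_pos

set_option linter.unusedSectionVars false in
lemma expW_term_bound (X : 𝔸) (n : ℕ) :
    ‖(((n + 2)! : ℝ))⁻¹ • X ^ n‖ ≤ ‖X‖ ^ n / n ! := by
  rw [norm_smul, Real.norm_eq_abs, abs_of_nonneg (by positivity)]
  have h1 : ‖X ^ n‖ ≤ ‖X‖ ^ n := norm_pow_le₀ X n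
  have h2 : ((n + 2)! : ℝ)⁻¹ ≤ ((n ! : ℝ))⁻¹ := by
    apply inv_anti₀ (by positivity)
    exact_mod_cast Nat.factorial_le (by omega)
  rw [div_eq_inv_mul]
  exact mul_le_mul h2 h1 (norm_nonneg _) (by positivity)

lemma summable_expW (X : 𝔸) : Summable fun n : ℕ => (((n + 2)! : ℝ))⁻¹ • X ^ n := by
  apply Summable.of_norm
  exact Summable.of_nonneg_of_le (fun n => norm_nonneg _) (expW_term_bound X)
    (Real.summable_pow_div_factorial ‖X‖)

set_option linter.unusedSectionVars false in
lemma norm_expW_le (X : 𝔸) : ‖expW X‖ ≤ Real.exp ‖X‖ := by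
  refine (norm_tsum_le_tsum_norm ?_).trans ?_
  · exact Summable.of_nonneg_of_le (fun n => norm_nonneg _) (expW_term_bound X)
      (Real.summable_pow_div_factorial ‖X‖)
  · have h := Summable.tsum_le_tsum (expW_term_bound X)
      (Summable.of_nonneg_of_le (fun n => norm_nonneg _) (expW_term_bound X)
        (Real.summable_pow_div_factorial ‖X‖))
      (Real.summable_pow_div_factorial ‖X‖)
    refine h.trans ?_
    rw [Real.exp_eq_exp_ℝ, NormedSpace.exp_eq_tsum_div]

lemma exp_eq_expW (X : 𝔸) : NormedSpace.exp X = 1 + X + X ^ 2 * expW X := by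
  have hs : Summable fun n : ℕ => ((n ! : ℝ))⁻¹ • X ^ n := NormedSpace.expSeries_summable' (𝕂 := ℝ) X
  have h0 : NormedSpace.exp X = ∑' n : ℕ, ((n ! : ℝ))⁻¹ • X ^ n := by
    rw [NormedSpace.exp_eq_tsum ℝ]
  rw [h0, ← Summable.sum_add_tsum_nat_add 2 hs]
  congr 1
  · simp [Finset.sum_range_succ]
  · rw [expW, ← ((summable_expW X).hasSum.mul_left (X ^ 2)).tsum_eq]
    congr 1
    funext n
    rw [mul_smul_comm, ← pow_add]
    congr 2
    omega

set_option linter.unusedSectionVars false in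
lemma commute_expW (X : 𝔸) : Commute X (expW X) := by
  have h := (summable_expW X).hasSum
  show X * _ = _ * X
  calc X * expW X = ∑' n : ℕ, X * ((((n + 2)! : ℝ))⁻¹ • X ^ n) := ((h.mul_left X).tsum_eq).symm
    _ = ∑' n : ℕ, ((((n + 2)! : ℝ))⁻¹ • X ^ n) * X := by
        congr 1; funext n
        rw [mul_smul_comm, smul_mul_assoc, ← pow_succ, ← pow_succ']
    _ = expW X * X := (h.mul_right X).tsum_eq

end Generic

/-- **Asymptotics of the inverse of `J_μ(coth(tS_μ/2) − I)`:** for `A` symmetric invertible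
and `t ≠ 0`, for all invertible skew-symmetric `J_μ` small enough, with `S_μ = -A J_μ`,
the matrix `J_μ(coth(tS_μ/2) − I)` is invertible and its inverse is `-(t/2)A + O(‖J_μ‖)`. -/
theorem inverse_coth_asymptotics
    (m : ℕ) (hm : 1 ≤ m) (A : Matrix (Fin m) (Fin m) ℝ) (hA : A.IsSymm) (hAunit : IsUnit A)
    (t : ℝ) (ht : t ≠ 0) :
    ∃ C > (0 : ℝ), ∃ δ > (0 : ℝ), ∀ Jμ : Matrix (Fin m) (Fin m) ℝ,
      Jμᵀ = -Jμ → IsUnit Jμ → matOpNorm Jμ < δ →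
        IsUnit (msinh ((t / 2) • (-A * Jμ))) ∧
        IsUnit (Jμ * (mcoth ((t / 2) • (-A * Jμ)) - 1)) ∧
        matOpNorm ((Jμ * (mcoth ((t / 2) • (-A * Jμ)) - 1))⁻¹ + (t / 2) • A) ≤
          C * matOpNorm Jμ := by
  classical
  letI : NormedRing (Matrix (Fin m) (Fin m) ℝ) := Matrix.instL2OpNormedRing
  letI : NormedAlgebra ℝ (Matrix (Fin m) (Fin m) ℝ) := Matrix.instL2OpNormedAlgebra
  haveI : CompleteSpace (Matrix (Fin m) (Fin m) ℝ) := FiniteDimensional.complete ℝ _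
  haveI : Nonempty (Fin m) := ⟨⟨0, hm⟩⟩
  haveI : Nontrivial (EuclideanSpace ℝ (Fin m)) := inferInstance
  haveI : NormOneClass (Matrix (Fin m) (Fin m) ℝ) := ⟨by
    have h : ‖(1 : Matrix (Fin m) (Fin m) ℝ)‖
        = ‖(toEuclideanCLM (𝕜 := ℝ) (1 : Matrix (Fin m) (Fin m) ℝ))‖ := rfl
    rw [h, _root_.map_one]
    exact norm_one⟩
  have hnorm : ∀ N : Matrix (Fin m) (Fin m) ℝ, matOpNorm N = ‖N‖ := fun _ => rfl
  have he1pos : (0:ℝ) < Real.exp 1 := Real.exp_pos 1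
  have he1lt : Real.exp 1 < 4 := lt_trans Real.exp_one_lt_d9 (by norm_num)
  refine ⟨t ^ 2 * Real.exp 1 / 2 * ‖A‖ ^ 2 + 1, by positivity,
    (4 * (|t| * ‖A‖ + 1))⁻¹, by positivity, ?_⟩
  intro J hJskew hJunit hJsmall
  have hJn : ‖J‖ < (4 * (|t| * ‖A‖ + 1))⁻¹ := hJsmall
  set S : Matrix (Fin m) (Fin m) ℝ := (t / 2) • (-A * J) with hSdef
  set X : Matrix (Fin m) (Fin m) ℝ := t • (-A * J) with hXdef
  -- commutation facts
  have hSX : Commute S X := ((Commute.refl (-A * J)).smul_left (t/2)).smul_right t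
  have hnSX : Commute (-S) X := hSX.neg_left
  have hXW : Commute X (expW X) := commute_expW X
  -- exponential identities
  have hXS : -S + X = S := by
    rw [hSdef, hXdef, ← neg_smul, ← add_smul]
    congr 1
    ring
  have h1 : NormedSpace.exp (-S) * NormedSpace.exp X = NormedSpace.exp S := by
    rw [← Matrix.exp_add_of_commute _ _ hnSX, hXS]
  have hcomm_e : Commute (NormedSpace.exp (-S)) (NormedSpace.exp X - 1) :=
    (hnSX.exp).sub_right (Commute.one_right _)
  have hsinh2 : msinh S = (2⁻¹ : ℝ) • (NormedSpace.exp (-S) * (NormedSpace.exp X - 1)) := by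
    rw [msinh]
    congr 1
    rw [mul_sub, h1, mul_one]
  have hsinh3 : msinh S = (2⁻¹ : ℝ) • ((NormedSpace.exp X - 1) * NormedSpace.exp (-S)) := by
    rw [hsinh2, hcomm_e.eq]
  have hfac : NormedSpace.exp X - 1 = X * (1 + X * expW X) := by
    rw [exp_eq_expW X]
    noncomm_ring
  -- unit facts
  have hXunit : IsUnit X := by
    rw [hXdef, Algebra.smul_def]
    exact ((isUnit_iff_ne_zero.mpr ht).map (algebraMap ℝ (Matrix (Fin m) (Fin m) ℝ))).mul (hAunit.neg.mul hJunit)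
  -- norm estimates
  have hXnorm : ‖X‖ ≤ |t| * (‖A‖ * ‖J‖) := by
    rw [hXdef, norm_smul, Real.norm_eq_abs]
    have : ‖-A * J‖ ≤ ‖A‖ * ‖J‖ := by
      calc ‖-A * J‖ ≤ ‖-A‖ * ‖J‖ := norm_mul_le _ _
        _ = ‖A‖ * ‖J‖ := by rw [norm_neg]
    exact mul_le_mul_of_nonneg_left this (abs_nonneg t)
  have hX14 : ‖X‖ < 4⁻¹ := by
    have h0J : (0:ℝ) ≤ ‖J‖ := norm_nonneg _
    have h1t : (0:ℝ) ≤ |t| * ‖A‖ := by positivity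
    have hd : (0:ℝ) < 4 * (|t| * ‖A‖ + 1) := by positivity
    have hinv : (4 * (|t| * ‖A‖ + 1)) * (4 * (|t| * ‖A‖ + 1))⁻¹ = 1 :=
      mul_inv_cancel₀ (ne_of_gt hd)
    have key : (4 * (|t| * ‖A‖ + 1)) * ‖J‖ < 1 := by
      calc (4 * (|t| * ‖A‖ + 1)) * ‖J‖ < (4 * (|t| * ‖A‖ + 1)) * (4 * (|t| * ‖A‖ + 1))⁻¹ :=
            mul_lt_mul_of_pos_left hJn hd
        _ = 1 := hinv
    nlinarith [hXnorm]
  have hWnorm : ‖expW X‖ ≤ Real.exp 1 := by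
    refine (norm_expW_le X).trans ?_
    apply Real.exp_le_exp.mpr
    nlinarith [hX14]
  have hXWnorm : ‖X * expW X‖ < 1 := by
    calc ‖X * expW X‖ ≤ ‖X‖ * ‖expW X‖ := norm_mul_le _ _
      _ < 1 := by nlinarith [norm_nonneg X, norm_nonneg (expW X), hX14, hWnorm]
  have hGunit : IsUnit (1 + X * expW X) := by
    have h := (Units.oneSub (-(X * expW X)) (by rwa [norm_neg])).isUnit
    simpa [sub_neg_eq_add] using h
  have hsmul_unit : ∀ (c : ℝ), c ≠ 0 → ∀ x : Matrix (Fin m) (Fin m) ℝ, IsUnit x →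
      IsUnit (c • x) := by
    intro c hc x hx
    rw [Algebra.smul_def]
    exact ((isUnit_iff_ne_zero.mpr hc).map (algebraMap ℝ (Matrix (Fin m) (Fin m) ℝ))).mul hx
  have hsinh_unit : IsUnit (msinh S) := by
    rw [hsinh2, hfac, ← mul_assoc]
    exact hsmul_unit _ (by norm_num) _
      (((Matrix.isUnit_exp _).mul hXunit).mul hGunit)
  -- the inverse formula
  have hcs : mcosh S - msinh S = NormedSpace.exp (-S) := by
    rw [mcosh, msinh]
    module
  have hcoth : mcoth S - 1 = NormedSpace.exp (-S) * Ring.inverse (msinh S) := by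
    rw [mcoth, Matrix.nonsing_inv_eq_ringInverse, ← hcs, sub_mul,
      Ring.mul_inverse_cancel _ hsinh_unit]
  set w : Matrix (Fin m) (Fin m) ℝ :=
    (2⁻¹ : ℝ) • ((NormedSpace.exp X - 1) * Ring.inverse J) with hwdef
  have hwu : w * (J * (mcoth S - 1)) = 1 := by
    rw [hcoth, hwdef, smul_mul_assoc]
    have hassoc : (NormedSpace.exp X - 1) * Ring.inverse J *
        (J * (NormedSpace.exp (-S) * Ring.inverse (msinh S)))
        = (NormedSpace.exp X - 1) * NormedSpace.exp (-S) * Ring.inverse (msinh S) := by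
      rw [mul_assoc (NormedSpace.exp X - 1), ← mul_assoc (Ring.inverse J),
        Ring.inverse_mul_cancel _ hJunit, one_mul, ← mul_assoc]
    rw [hassoc, ← smul_mul_assoc, ← hsinh3, Ring.mul_inverse_cancel _ hsinh_unit]
  have huw : (J * (mcoth S - 1)) * w = 1 := mul_eq_one_comm.mp hwu
  have hu_unit : IsUnit (J * (mcoth S - 1)) := ⟨⟨J * (mcoth S - 1), w, huw, hwu⟩, rfl⟩
  have hinv_eq : (J * (mcoth S - 1))⁻¹ = w := by
    rw [Matrix.nonsing_inv_eq_ringInverse]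
    exact Ring.inverse_unit ⟨J * (mcoth S - 1), w, huw, hwu⟩
  -- value of the inverse
  have hXJ : X * Ring.inverse J = (-t) • A := by
    rw [hXdef, smul_mul_assoc, neg_mul, neg_mul, mul_assoc,
      Ring.mul_inverse_cancel _ hJunit, mul_one, smul_neg, ← neg_smul]
  have hw_eq : w = (2⁻¹ : ℝ) • ((1 + X * expW X) * ((-t) • A)) := by
    rw [hwdef, hfac]
    congr 1
    have hcX : Commute X (1 + X * expW X) :=
      (Commute.one_right X).add_right ((Commute.refl X).mul_right hXW)
    rw [hcX.eq, mul_assoc, hXJ]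
  have hfinal_eq : w + (t / 2) • A = (-(t / 2)) • (X * expW X * A) := by
    rw [hw_eq, add_mul, one_mul, mul_smul_comm]
    module
  have hbound : ‖w + (t / 2) • A‖ ≤ (t ^ 2 * Real.exp 1 / 2 * ‖A‖ ^ 2 + 1) * ‖J‖ := by
    rw [hfinal_eq, norm_smul, Real.norm_eq_abs]
    have h2 : |(-(t / 2))| = |t| / 2 := by rw [abs_neg, abs_div]; norm_num
    rw [h2]
    calc |t| / 2 * ‖X * expW X * A‖ ≤ |t| / 2 * (‖X * expW X‖ * ‖A‖) := by
          gcongr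
          exact norm_mul_le _ _
      _ ≤ |t| / 2 * ((‖X‖ * ‖expW X‖) * ‖A‖) := by
          gcongr
          exact norm_mul_le _ _
      _ ≤ |t| / 2 * (((|t| * (‖A‖ * ‖J‖)) * Real.exp 1) * ‖A‖) := by
          gcongr
      _ = |t| ^ 2 * Real.exp 1 / 2 * ‖A‖ ^ 2 * ‖J‖ := by ring
      _ = t ^ 2 * Real.exp 1 / 2 * ‖A‖ ^ 2 * ‖J‖ := by rw [sq_abs]
      _ ≤ (t ^ 2 * Real.exp 1 / 2 * ‖A‖ ^ 2 + 1) * ‖J‖ :=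
          mul_le_mul_of_nonneg_right (le_add_of_nonneg_right zero_le_one) (norm_nonneg J)
  refine ⟨hsinh_unit, hu_unit, ?_⟩
  rw [hnorm, hnorm, hinv_eq]
  exact hbound
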